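/- For all n ∈ ℕ, all x, y ∈ [0,1], and every convex continuous function f : [0,1] → ℝ, one has ∑_{i=0}^n ∑_{j=0}^n [b_{n,i}(x) b_{n,j}(x) + b_{n,i}(y) b_{n,j}(y) − 2 b_{n,i}(x) b_{n,j}(y)] f((i+j)/(2n)) ≥ 0. -/

import Mathlib

/-- Bernstein basis polynomial `b_{n,k}(x) = C(n,k) x^k (1-x)^(n-k)`. -/
def bern (n k : ℕ) (x : ℝ) : ℝ := (n.choose k : ℝ) * x ^ k * (1 - x) ^ (n - k)

/-- Joint (trinomial) distribution coupling `Bin(n,x)` and `Bin(n,y)` for `x ≤ y`. -/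
def qd (n : ℕ) (x y : ℝ) (i j : ℕ) : ℝ :=
  if i ≤ j then (n.choose j : ℝ) * (j.choose i : ℝ) * x ^ i * (y - x) ^ (j - i)
    * (1 - y) ^ (n - j) else 0

lemma four_pt {f : ℝ → ℝ} (hf : ConvexOn ℝ (Set.Icc 0 1) f) {a b c d : ℝ}
    (hc : c ∈ Set.Icc (0:ℝ) 1) (hd : d ∈ Set.Icc (0:ℝ) 1) (hca : c ≤ a) (had : a ≤ d)
    (hsum : a + b = c + d) : f a + f b ≤ f c + f d := by
  rcases eq_or_lt_of_le (hca.trans had) with h | h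
  · have h1 : a = c := le_antisymm (h ▸ had) hca
    have h2 : b = d := by rw [h1] at hsum; linarith
    rw [h1, h2]
  · set t := (d - a) / (d - c) with ht
    have hdc : (0:ℝ) < d - c := by linarith
    have ht0 : 0 ≤ t := div_nonneg (by linarith) hdc.le
    have ht1 : t ≤ 1 := by rw [ht, div_le_one hdc]; linarith
    have hmul : t * (d - c) = d - a := div_mul_cancel₀ _ hdc.ne'
    have ha : a = t * c + (1 - t) * d := by nlinarith [hmul]
    have hb : b = (1 - t) * c + t * d := by nlinarith [hmul]
    have h1 := hf.2 hc hd ht0 (by linarith : (0:ℝ) ≤ 1 - t) (by ring)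
    have h2 := hf.2 hc hd (by linarith : (0:ℝ) ≤ 1 - t) ht0 (by ring)
    simp only [smul_eq_mul] at h1 h2
    rw [← ha] at h1
    rw [← hb] at h2
    nlinarith [h1, h2]

lemma qd_row (n i : ℕ) (x y : ℝ) (hi : i ≤ n) :
    ∑ j ∈ Finset.range (n + 1), qd n x y i j = bern n i x := by
  have h1 : ∑ j ∈ Finset.range (n + 1), qd n x y i j
      = ∑ j ∈ Finset.Ico i (n + 1), qd n x y i j := by
    refine (Finset.sum_subset (fun j hj => Finset.mem_range.2 (Finset.mem_Ico.1 hj).2) ?_).symm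
    intro j hj hj'
    have hji : ¬ i ≤ j := by
      simp only [Finset.mem_range] at hj
      simp only [Finset.mem_Ico] at hj'
      omega
    simp [qd, hji]
  rw [h1, Finset.sum_Ico_eq_sum_range]
  have h2 : n + 1 - i = (n - i) + 1 := by omega
  rw [h2]
  have h3 : ∀ m ∈ Finset.range (n - i + 1), qd n x y i (i + m)
      = ((n.choose i : ℝ) * x ^ i) *
        (((n - i).choose m : ℝ) * (y - x) ^ m * (1 - y) ^ (n - i - m)) := by
    intro m hm
    have hm' : m ≤ n - i := Nat.lt_succ_iff.1 (Finset.mem_range.1 hm)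
    have hin : i + m ≤ n := by omega
    have hch : n.choose (i + m) * (i + m).choose i = n.choose i * (n - i).choose m := by
      rw [Nat.choose_mul (Nat.le_add_right i m), Nat.add_sub_cancel_left]
    have hchR : (n.choose (i + m) : ℝ) * ((i + m).choose i : ℝ)
        = (n.choose i : ℝ) * ((n - i).choose m : ℝ) := by exact_mod_cast hch
    unfold qd
    rw [if_pos (Nat.le_add_right i m)]
    have e1 : i + m - i = m := by omega
    have e2 : n - (i + m) = n - i - m := by omega
    rw [e1, e2, hchR]
    ring
  rw [Finset.sum_congr rfl h3, ← Finset.mul_sum]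
  have hb : ∑ m ∈ Finset.range (n - i + 1),
      (((n - i).choose m : ℝ) * (y - x) ^ m * (1 - y) ^ (n - i - m)) = (1 - x) ^ (n - i) := by
    have h := add_pow (y - x) (1 - y) (n - i)
    have e : y - x + (1 - y) = 1 - x := by ring
    rw [e] at h
    rw [h]
    exact Finset.sum_congr rfl fun m _ => by ring
  rw [hb]
  unfold bern
  ring

lemma qd_col (n j : ℕ) (x y : ℝ) (hj : j ≤ n) :
    ∑ i ∈ Finset.range (n + 1), qd n x y i j = bern n j y := by
  have h1 : ∑ i ∈ Finset.range (n + 1), qd n x y i j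
      = ∑ i ∈ Finset.range (j + 1), qd n x y i j := by
    refine (Finset.sum_subset (fun i hi => ?_) ?_).symm
    · simp only [Finset.mem_range] at hi ⊢; omega
    · intro i hi hi'
      have hij : ¬ i ≤ j := by
        simp only [Finset.mem_range] at hi hi'
        omega
      simp [qd, hij]
  rw [h1]
  have h3 : ∀ i ∈ Finset.range (j + 1), qd n x y i j
      = ((n.choose j : ℝ) * (1 - y) ^ (n - j)) *
        (x ^ i * (y - x) ^ (j - i) * (j.choose i : ℝ)) := by
    intro i hi
    have hij : i ≤ j := Nat.lt_succ_iff.1 (Finset.mem_range.1 hi)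
    unfold qd
    rw [if_pos hij]
    ring
  rw [Finset.sum_congr rfl h3, ← Finset.mul_sum]
  have h := add_pow x (y - x) j
  have e : x + (y - x) = y := by ring
  rw [e] at h
  rw [← h]
  unfold bern
  ring

lemma collapse (S : Finset ℕ) (p r : ℕ → ℕ → ℝ) (P R : ℕ → ℝ) (g : ℕ → ℕ → ℝ)
    (hp : ∀ a ∈ S, ∑ b ∈ S, p a b = P a) (hr : ∀ a ∈ S, ∑ b ∈ S, r a b = R a) :
    ∑ i ∈ S, ∑ j ∈ S, ∑ i' ∈ S, ∑ j' ∈ S, p i j * (r i' j' * g i i')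
      = ∑ a ∈ S, ∑ b ∈ S, P a * (R b * g a b) := by
  refine Finset.sum_congr rfl fun i hi => ?_
  have e1 : ∀ j, ∑ i' ∈ S, ∑ j' ∈ S, p i j * (r i' j' * g i i')
      = p i j * ∑ b ∈ S, R b * g i b := by
    intro j
    rw [Finset.mul_sum]
    refine Finset.sum_congr rfl fun b hb => ?_
    calc ∑ j' ∈ S, p i j * (r b j' * g i b)
        = (∑ j' ∈ S, r b j') * (p i j * g i b) := by
          rw [Finset.sum_mul]; exact Finset.sum_congr rfl fun _ _ => by ring
      _ = p i j * (R b * g i b) := by rw [hr b hb]; ring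
  rw [Finset.sum_congr rfl (fun j _ => e1 j), ← Finset.sum_mul, hp i hi, Finset.mul_sum]

lemma stmt_aux (n : ℕ) (hn : 0 < n) (x y : ℝ) (hx : x ∈ Set.Icc (0:ℝ) 1)
    (hy : y ∈ Set.Icc (0:ℝ) 1) (hxy : x ≤ y) (f : ℝ → ℝ)
    (hf : ConvexOn ℝ (Set.Icc 0 1) f) :
    0 ≤ ∑ i ∈ Finset.range (n+1), ∑ j ∈ Finset.range (n+1),
      (bern n i x * bern n j x + bern n i y * bern n j y - 2 * bern n i x * bern n j y)
        * f ((i + j : ℝ) / (2 * n)) := by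
  obtain ⟨hx0, hx1⟩ := hx
  obtain ⟨hy0, hy1⟩ := hy
  set S := Finset.range (n + 1) with hS
  have h2n : (0:ℝ) < 2 * n := by
    have : (0:ℝ) < n := by exact_mod_cast hn
    linarith
  have hq0 : ∀ i j, 0 ≤ qd n x y i j := by
    intro i j
    unfold qd
    split
    · exact mul_nonneg (mul_nonneg (mul_nonneg (mul_nonneg
        (Nat.cast_nonneg _) (Nat.cast_nonneg _)) (pow_nonneg hx0 _))
        (pow_nonneg (by linarith) _)) (pow_nonneg (by linarith) _)
    · exact le_rfl
  have hmem : ∀ a b : ℕ, a ≤ n → b ≤ n → ((a:ℝ) + b) / (2 * n) ∈ Set.Icc (0:ℝ) 1 := by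
    intro a b ha hb
    constructor
    · positivity
    · rw [div_le_one h2n]
      have ha' : (a:ℝ) ≤ n := Nat.cast_le.2 ha
      have hb' : (b:ℝ) ≤ n := Nat.cast_le.2 hb
      linarith
  have key : ∀ i ∈ S, ∀ j ∈ S, ∀ i' ∈ S, ∀ j' ∈ S,
      0 ≤ qd n x y i j * (qd n x y i' j' *
        (f (((i:ℝ) + i') / (2 * n)) + f (((j:ℝ) + j') / (2 * n))
          - f (((i:ℝ) + j') / (2 * n)) - f (((j:ℝ) + i') / (2 * n)))) := by
    intro i hi j hj i' hi' j' hj'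
    have hiN : i ≤ n := Nat.lt_succ_iff.1 (Finset.mem_range.1 hi)
    have hjN : j ≤ n := Nat.lt_succ_iff.1 (Finset.mem_range.1 hj)
    have hiN' : i' ≤ n := Nat.lt_succ_iff.1 (Finset.mem_range.1 hi')
    have hjN' : j' ≤ n := Nat.lt_succ_iff.1 (Finset.mem_range.1 hj')
    by_cases hij : i ≤ j
    · by_cases hij' : i' ≤ j'
      · refine mul_nonneg (hq0 _ _) (mul_nonneg (hq0 _ _) ?_)
        have h4 := four_pt (b := ((j:ℝ) + i') / (2 * n)) hf
          (hmem i i' hiN hiN') (hmem j j' hjN hjN')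
          (show ((i:ℝ) + i') / (2 * n) ≤ ((i:ℝ) + j') / (2 * n) by
            rw [div_le_div_iff_of_pos_right h2n]
            have : (i':ℝ) ≤ j' := Nat.cast_le.2 hij'
            linarith)
          (show ((i:ℝ) + j') / (2 * n) ≤ ((j:ℝ) + j') / (2 * n) by
            rw [div_le_div_iff_of_pos_right h2n]
            have : (i:ℝ) ≤ j := Nat.cast_le.2 hij
            linarith)
          (by ring)
        linarith [h4]
      · simp [qd, hij']
    · simp [qd, hij]
  have hQ : 0 ≤ ∑ i ∈ S, ∑ j ∈ S, ∑ i' ∈ S, ∑ j' ∈ S, qd n x y i j * (qd n x y i' j' *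
      (f (((i:ℝ) + i') / (2 * n)) + f (((j:ℝ) + j') / (2 * n))
        - f (((i:ℝ) + j') / (2 * n)) - f (((j:ℝ) + i') / (2 * n)))) :=
    Finset.sum_nonneg fun i hi => Finset.sum_nonneg fun j hj =>
      Finset.sum_nonneg fun i' hi' => Finset.sum_nonneg fun j' hj' =>
        key i hi j hj i' hi' j' hj'
  refine le_trans hQ (le_of_eq ?_)
  have hrow : ∀ a ∈ S, ∑ b ∈ S, qd n x y a b = bern n a x := fun a ha =>
    qd_row n a x y (Nat.lt_succ_iff.1 (Finset.mem_range.1 ha))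
  have hcol : ∀ a ∈ S, ∑ b ∈ S, qd n x y b a = bern n a y := fun a ha =>
    qd_col n a x y (Nat.lt_succ_iff.1 (Finset.mem_range.1 ha))
  have hQ1 : (∑ i ∈ S, ∑ j ∈ S, ∑ i' ∈ S, ∑ j' ∈ S, qd n x y i j *
        (qd n x y i' j' * f (((i:ℝ) + i') / (2 * n))))
      = ∑ a ∈ S, ∑ b ∈ S, bern n a x * (bern n b x * f (((a:ℝ) + b) / (2 * n))) :=
    collapse S (qd n x y) (qd n x y) (fun a => bern n a x) (fun a => bern n a x)
      (fun a b => f (((a:ℝ) + b) / (2 * n))) hrow hrow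
  have hQ2 : (∑ i ∈ S, ∑ j ∈ S, ∑ i' ∈ S, ∑ j' ∈ S, qd n x y i j *
        (qd n x y i' j' * f (((j:ℝ) + j') / (2 * n))))
      = ∑ a ∈ S, ∑ b ∈ S, bern n a y * (bern n b y * f (((a:ℝ) + b) / (2 * n))) :=
    Finset.sum_comm.trans
      ((Finset.sum_congr rfl fun j _ => Finset.sum_congr rfl fun i _ => Finset.sum_comm).trans
        (collapse S (fun a b => qd n x y b a) (fun a b => qd n x y b a)
          (fun a => bern n a y) (fun a => bern n a y)
          (fun a b => f (((a:ℝ) + b) / (2 * n))) hcol hcol))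
  have hQ3 : (∑ i ∈ S, ∑ j ∈ S, ∑ i' ∈ S, ∑ j' ∈ S, qd n x y i j *
        (qd n x y i' j' * f (((i:ℝ) + j') / (2 * n))))
      = ∑ a ∈ S, ∑ b ∈ S, bern n a x * (bern n b y * f (((a:ℝ) + b) / (2 * n))) :=
    (Finset.sum_congr rfl fun i _ => Finset.sum_congr rfl fun j _ => Finset.sum_comm).trans
      (collapse S (qd n x y) (fun a b => qd n x y b a)
        (fun a => bern n a x) (fun a => bern n a y)
        (fun a b => f (((a:ℝ) + b) / (2 * n))) hrow hcol)
  have hQ4 : (∑ i ∈ S, ∑ j ∈ S, ∑ i' ∈ S, ∑ j' ∈ S, qd n x y i j *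
        (qd n x y i' j' * f (((j:ℝ) + i') / (2 * n))))
      = ∑ a ∈ S, ∑ b ∈ S, bern n a y * (bern n b x * f (((a:ℝ) + b) / (2 * n))) :=
    Finset.sum_comm.trans
      (collapse S (fun a b => qd n x y b a) (qd n x y)
        (fun a => bern n a y) (fun a => bern n a x)
        (fun a b => f (((a:ℝ) + b) / (2 * n))) hcol hrow)
  have hS43 : (∑ a ∈ S, ∑ b ∈ S, bern n a y * (bern n b x * f (((a:ℝ) + b) / (2 * n))))
      = ∑ a ∈ S, ∑ b ∈ S, bern n a x * (bern n b y * f (((a:ℝ) + b) / (2 * n))) :=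
    Finset.sum_comm.trans (Finset.sum_congr rfl fun a _ => Finset.sum_congr rfl fun b _ => by
      rw [add_comm (b:ℝ) (a:ℝ)]; ring)
  calc (∑ i ∈ S, ∑ j ∈ S, ∑ i' ∈ S, ∑ j' ∈ S, qd n x y i j * (qd n x y i' j' *
      (f (((i:ℝ) + i') / (2 * n)) + f (((j:ℝ) + j') / (2 * n))
        - f (((i:ℝ) + j') / (2 * n)) - f (((j:ℝ) + i') / (2 * n)))))
      = (∑ i ∈ S, ∑ j ∈ S, ∑ i' ∈ S, ∑ j' ∈ S, qd n x y i j *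
            (qd n x y i' j' * f (((i:ℝ) + i') / (2 * n))))
        + (∑ i ∈ S, ∑ j ∈ S, ∑ i' ∈ S, ∑ j' ∈ S, qd n x y i j *
            (qd n x y i' j' * f (((j:ℝ) + j') / (2 * n))))
        - (∑ i ∈ S, ∑ j ∈ S, ∑ i' ∈ S, ∑ j' ∈ S, qd n x y i j *
            (qd n x y i' j' * f (((i:ℝ) + j') / (2 * n))))
        - (∑ i ∈ S, ∑ j ∈ S, ∑ i' ∈ S, ∑ j' ∈ S, qd n x y i j *
            (qd n x y i' j' * f (((j:ℝ) + i') / (2 * n)))) := by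
        simp only [mul_add, mul_sub, Finset.sum_add_distrib, Finset.sum_sub_distrib]
    _ = (∑ a ∈ S, ∑ b ∈ S, bern n a x * (bern n b x * f (((a:ℝ) + b) / (2 * n))))
        + (∑ a ∈ S, ∑ b ∈ S, bern n a y * (bern n b y * f (((a:ℝ) + b) / (2 * n))))
        - (∑ a ∈ S, ∑ b ∈ S, bern n a x * (bern n b y * f (((a:ℝ) + b) / (2 * n))))
        - (∑ a ∈ S, ∑ b ∈ S, bern n a x * (bern n b y * f (((a:ℝ) + b) / (2 * n)))) := by
        rw [hQ1, hQ2, hQ3, hQ4, hS43]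
    _ = ∑ i ∈ S, ∑ j ∈ S,
        (bern n i x * bern n j x + bern n i y * bern n j y - 2 * bern n i x * bern n j y)
          * f ((i + j : ℝ) / (2 * n)) := by
        simp only [← Finset.sum_add_distrib, ← Finset.sum_sub_distrib]
        exact Finset.sum_congr rfl fun i _ => Finset.sum_congr rfl fun j _ => by ring

theorem stmt0 (n : ℕ) (x y : ℝ) (hx : x ∈ Set.Icc (0:ℝ) 1) (hy : y ∈ Set.Icc (0:ℝ) 1)
    (f : ℝ → ℝ) (hf : ConvexOn ℝ (Set.Icc 0 1) f) (hfc : ContinuousOn f (Set.Icc 0 1)) :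
    0 ≤ ∑ i ∈ Finset.range (n+1), ∑ j ∈ Finset.range (n+1),
      (bern n i x * bern n j x + bern n i y * bern n j y - 2 * bern n i x * bern n j y)
        * f ((i + j : ℝ) / (2 * n)) := by
  rcases Nat.eq_zero_or_pos n with rfl | hn
  · norm_num [bern]
  · rcases le_total x y with h | h
    · exact stmt_aux n hn x y hx hy h f hf
    · refine le_trans (stmt_aux n hn y x hy hx h f hf) (le_of_eq ?_)
      refine Finset.sum_comm.trans
        (Finset.sum_congr rfl fun i _ => Finset.sum_congr rfl fun j _ => ?_)
      rw [add_comm (j:ℝ) (i:ℝ)]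
      ring
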